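/- Let S be a 0-simplifying Tarski monoid and let e be any non-zero idempotent of S. Then there exist infinitesimals a, b ∈ eSe such that a⁻¹a = bb⁻¹ (the product ab is a restricted product) and ab is itself an infinitesimal. -/
import Mathlib


universe u

/-- An inverse monoid with zero: every element `a` has a unique generalized
inverse `a⁻¹`, and `0` is an absorbing element. -/
class InverseMonoidWithZero (S : Type u) extends Monoid S, Zero S, Inv S where
  zero_mul' : ∀ a : S, 0 * a = 0
  mul_zero' : ∀ a : S, a * 0 = 0
  mul_inv_mul : ∀ a : S, a * a⁻¹ * a = a
  inv_mul_inv : ∀ a : S, a⁻¹ * a * a⁻¹ = a⁻¹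
  inv_unique : ∀ a b : S, a * b * a = a → b * a * b = b → b = a⁻¹

section BasicDefs

variable {S : Type u}

/-- The natural partial order: `a ≤ b` iff `a = e * b` for some idempotent `e`. -/
def nle [InverseMonoidWithZero S] (a b : S) : Prop :=
  ∃ e : S, e * e = e ∧ a = e * b

/-- `a` and `b` are compatible if `a * b⁻¹` and `a⁻¹ * b` are idempotents. -/
def Compat [InverseMonoidWithZero S] (a b : S) : Prop :=
  (a * b⁻¹) * (a * b⁻¹) = a * b⁻¹ ∧ (a⁻¹ * b) * (a⁻¹ * b) = a⁻¹ * b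

/-- `a` and `b` are orthogonal if `a * b⁻¹ = 0` and `a⁻¹ * b = 0`. -/
def Orth [InverseMonoidWithZero S] (a b : S) : Prop :=
  a * b⁻¹ = 0 ∧ a⁻¹ * b = 0

end BasicDefs

/-- A distributive inverse monoid: every compatible pair has a join (for the
natural partial order), recorded by `sup`, and multiplication distributes over
these binary joins. -/
class DistributiveInverseMonoid (S : Type u) extends InverseMonoidWithZero S where
  sup : S → S → S
  le_sup_left : ∀ a b : S, Compat a b → nle a (sup a b)
  le_sup_right : ∀ a b : S, Compat a b → nle b (sup a b)
  sup_le : ∀ a b c : S, Compat a b → nle a c → nle b c → nle (sup a b) c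
  mul_sup : ∀ a b c : S, Compat a b → c * sup a b = sup (c * a) (c * b)
  sup_mul : ∀ a b c : S, Compat a b → sup a b * c = sup (a * c) (b * c)

/-- A Boolean inverse monoid: a distributive inverse monoid whose idempotents
form a Boolean algebra under the natural partial order; `compl` records the
complementation on idempotents. -/
class BooleanInverseMonoid (S : Type u) extends DistributiveInverseMonoid S where
  compl : S → S
  compl_idem : ∀ e : S, e * e = e → compl e * compl e = compl e
  mul_compl : ∀ e : S, e * e = e → e * compl e = 0
  sup_compl : ∀ e : S, e * e = e → sup e (compl e) = 1

/-- A Boolean inverse ∧-monoid: a Boolean inverse monoid in which every pair of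
elements has a meet with respect to the natural partial order. -/
class BooleanInverseMeetMonoid (S : Type u) extends BooleanInverseMonoid S where
  inf : S → S → S
  inf_le_left : ∀ a b : S, nle (inf a b) a
  inf_le_right : ∀ a b : S, nle (inf a b) b
  le_inf : ∀ a b c : S, nle c a → nle c b → nle c (inf a b)

section MoreDefs

variable {S : Type u}

/-- The join of a compatible pair. -/
def bsup [DistributiveInverseMonoid S] (a b : S) : S := DistributiveInverseMonoid.sup a b

/-- Complementation in the Boolean algebra of idempotents. -/
def bcompl [BooleanInverseMonoid S] (e : S) : S := BooleanInverseMonoid.compl e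

/-- The binary meet. -/
def binf [BooleanInverseMeetMonoid S] (a b : S) : S := BooleanInverseMeetMonoid.inf a b

/-- The fixed-point operator `φ(s) = s ∧ 1`. -/
def phi [BooleanInverseMeetMonoid S] (s : S) : S := binf s 1

/-- The support operator `σ(s) = \overline{φ(s)} ⋅ s⁻¹ s`. -/
def sigma [BooleanInverseMeetMonoid S] (s : S) : S := bcompl (phi s) * (s⁻¹ * s)

/-- An infinitesimal is a non-zero element that squares to zero. -/
def Infinitesimal [InverseMonoidWithZero S] (a : S) : Prop := a ≠ 0 ∧ a * a = 0

/-- A (two-sided) ideal. -/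
def IsMIdeal [InverseMonoidWithZero S] (I : Set S) : Prop :=
  I.Nonempty ∧ ∀ a ∈ I, ∀ s : S, s * a ∈ I ∧ a * s ∈ I

/-- A ∨-ideal: an ideal closed under joins of compatible pairs. -/
def IsVIdeal [DistributiveInverseMonoid S] (I : Set S) : Prop :=
  IsMIdeal I ∧ ∀ a ∈ I, ∀ b ∈ I, Compat a b → bsup a b ∈ I

end MoreDefs

/-- 0-simplifying: the only ∨-ideals are `{0}` and `S`. -/
def ZeroSimplifying (S : Type u) [DistributiveInverseMonoid S] : Prop :=
  ∀ I : Set S, IsVIdeal I → I = {0} ∨ I = Set.univ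

/-- 0-simple: non-trivial and the only ideals are `{0}` and `S`. -/
def ZeroSimple (S : Type u) [InverseMonoidWithZero S] : Prop :=
  (∃ s : S, s ≠ 0) ∧ ∀ I : Set S, IsMIdeal I → I = {0} ∨ I = Set.univ

/-- Fundamental: every element commuting with all idempotents is an idempotent. -/
def Fundamental (S : Type u) [InverseMonoidWithZero S] : Prop :=
  ∀ a : S, (∀ e : S, e * e = e → a * e = e * a) → a * a = a

/-- The Boolean algebra of idempotents is atomless. -/
def IdemAtomless (S : Type u) [InverseMonoidWithZero S] : Prop :=
  ∀ e : S, e * e = e → e ≠ 0 → ∃ f : S, f * f = f ∧ f ≠ 0 ∧ nle f e ∧ f ≠ e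

section Filters

variable {S : Type u}

/-- A filter in a Boolean inverse ∧-monoid: a nonempty subset closed under
binary meets and upward closed in the natural partial order. -/
def IsMFilter [BooleanInverseMeetMonoid S] (A : Set S) : Prop :=
  A.Nonempty ∧ (∀ a ∈ A, ∀ b ∈ A, binf a b ∈ A) ∧ ∀ a ∈ A, ∀ b : S, nle a b → b ∈ A

/-- An ultrafilter: a maximal proper filter. -/
def IsMUltrafilter [BooleanInverseMeetMonoid S] (A : Set S) : Prop :=
  IsMFilter A ∧ (0 : S) ∉ A ∧ ∀ B : Set S, IsMFilter B → (0 : S) ∉ B → A ⊆ B → A = B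

/-- A filter of the Boolean algebra of idempotents (meet of idempotents is
their product). -/
def IsIdemFilter [InverseMonoidWithZero S] (F : Set S) : Prop :=
  F.Nonempty ∧ (∀ e ∈ F, e * e = e) ∧ (∀ e ∈ F, ∀ f ∈ F, e * f ∈ F) ∧
    ∀ e ∈ F, ∀ f : S, f * f = f → nle e f → f ∈ F

/-- An ultrafilter of the Boolean algebra of idempotents. -/
def IsIdemUltrafilter [InverseMonoidWithZero S] (F : Set S) : Prop :=
  IsIdemFilter F ∧ (0 : S) ∉ F ∧
    ∀ G : Set S, IsIdemFilter G → (0 : S) ∉ G → F ⊆ G → F = G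

end Filters

section PencilDefs

variable {S : Type u}

/-- `Preceq e f`: there is a pencil from `e` to `f`, i.e. finitely many
elements `x₁, …, xₘ` with `r(xᵢ) ≤ f` for all `i` and `e = ⋁ d(xᵢ)`
(a least upper bound for the natural partial order). -/
def Preceq [DistributiveInverseMonoid S] (e f : S) : Prop :=
  ∃ l : List S, l ≠ [] ∧ (∀ x ∈ l, nle (x * x⁻¹) f) ∧
    (∀ x ∈ l, nle (x⁻¹ * x) e) ∧ ∀ c : S, (∀ x ∈ l, nle (x⁻¹ * x) c) → nle e c

/-- Piecewise factorizable: every element is a finite join of elements each of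
which lies beneath a unit. -/
def PiecewiseFactorizable (S : Type u) [DistributiveInverseMonoid S] : Prop :=
  ∀ s : S, ∃ l : List S, l ≠ [] ∧ (∀ x ∈ l, ∃ g : S, IsUnit g ∧ nle x g) ∧
    (∀ x ∈ l, nle x s) ∧ ∀ c : S, (∀ x ∈ l, nle x c) → nle s c

/-- A properly infinite idempotent. -/
def ProperlyInfinite [DistributiveInverseMonoid S] (e : S) : Prop :=
  ∃ x y : S, x⁻¹ * x = e ∧ y⁻¹ * y = e ∧ Orth (x * x⁻¹) (y * y⁻¹) ∧
    nle (bsup (x * x⁻¹) (y * y⁻¹)) e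

end PencilDefs

/-- Purely infinite: every non-zero idempotent is properly infinite. -/
def PurelyInfinite (S : Type u) [DistributiveInverseMonoid S] : Prop :=
  ∀ e : S, e * e = e → e ≠ 0 → ProperlyInfinite e


section Toolbox

variable {S : Type u} [InverseMonoidWithZero S]

open InverseMonoidWithZero

lemma zmul (a : S) : 0 * a = 0 := zero_mul' a
lemma mulz (a : S) : a * 0 = 0 := mul_zero' a
lemma mim (a : S) : a * a⁻¹ * a = a := mul_inv_mul a
lemma imi (a : S) : a⁻¹ * a * a⁻¹ = a⁻¹ := inv_mul_inv a

lemma iinv (a : S) : a⁻¹⁻¹ = a := (inv_unique a⁻¹ a (imi a) (mim a)).symm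

lemma idem_inv {e : S} (h : e * e = e) : e⁻¹ = e :=
  (inv_unique e e (by rw [h, h]) (by rw [h, h])).symm

lemma zinv : (0 : S)⁻¹ = 0 := idem_inv (mulz 0)

lemma dd_idem (a : S) : (a⁻¹ * a) * (a⁻¹ * a) = a⁻¹ * a := by
  have h : (a⁻¹ * a) * (a⁻¹ * a) = (a⁻¹ * a * a⁻¹) * a := by simp only [mul_assoc]
  rw [h, imi]

lemma rr_idem (a : S) : (a * a⁻¹) * (a * a⁻¹) = a * a⁻¹ := by
  rw [← mul_assoc, mim]

lemma idem_mul_idem {e f : S} (he : e * e = e) (hf : f * f = f) :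
    (e * f) * (e * f) = e * f := by
  set x := (e * f)⁻¹ with hx
  have h1 : (e * f) * (f * x * e) * (e * f) = e * f := by
    have : (e * f) * (f * x * e) * (e * f) = e * ((f * f) * x * (e * e)) * f := by
      simp only [mul_assoc]
    rw [this, hf, he]
    have : e * (f * x * e) * f = e * f * x * (e * f) := by simp only [mul_assoc]
    rw [this, hx, mim]
  have h2 : (f * x * e) * (e * f) * (f * x * e) = f * x * e := by
    have : (f * x * e) * (e * f) * (f * x * e) = f * (x * ((e * e) * (f * f)) * x) * e := by
      simp only [mul_assoc]
    rw [this, he, hf]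
    have h3 : x * (e * f) * x = x := by rw [hx, imi]
    have : f * (x * (e * f) * x) * e = f * x * (e * f) * x * e := by
      simp only [mul_assoc]
    rw [h3]
  have hxe : f * x * e = x := inv_unique (e * f) (f * x * e) h1 h2
  have hxx : x * x = x := by
    conv_lhs => rw [← hxe]
    have : (f * x * e) * (f * x * e) = f * (x * (e * f) * x) * e := by
      simp only [mul_assoc]
    rw [this, hx, imi, hxe]
  have : e * f = x⁻¹ := by rw [hx, iinv]
  rw [this, idem_inv hxx] at *
  exact hxx

lemma idem_comm {e f : S} (he : e * e = e) (hf : f * f = f) : e * f = f * e := by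
  have hef := idem_mul_idem he hf
  have hfe := idem_mul_idem hf he
  have h1 : (e * f) * (f * e) * (e * f) = e * f := by
    have : (e * f) * (f * e) * (e * f) = e * (f * f) * ((e * e) * f) := by
      simp only [mul_assoc]
    rw [this, hf, he]; exact hef
  have h2 : (f * e) * (e * f) * (f * e) = f * e := by
    have : (f * e) * (e * f) * (f * e) = f * (e * e) * ((f * f) * e) := by
      simp only [mul_assoc]
    rw [this, he, hf]; exact hfe
  have := inv_unique (e * f) (f * e) h1 h2
  rw [this, idem_inv hef]

lemma mul_inv_rev' (a b : S) : (a * b)⁻¹ = b⁻¹ * a⁻¹ := by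
  have h1 : (a * b) * (b⁻¹ * a⁻¹) * (a * b) = a * b := by
    have : (a * b) * (b⁻¹ * a⁻¹) * (a * b) = a * ((b * b⁻¹) * (a⁻¹ * a)) * b := by
      simp only [mul_assoc]
    rw [this, idem_comm (rr_idem b) (dd_idem a)]
    have : a * ((a⁻¹ * a) * (b * b⁻¹)) * b = (a * a⁻¹ * a) * (b * b⁻¹ * b) := by
      simp only [mul_assoc]
    rw [this, mim, mim]
  have h2 : (b⁻¹ * a⁻¹) * (a * b) * (b⁻¹ * a⁻¹) = b⁻¹ * a⁻¹ := by
    have : (b⁻¹ * a⁻¹) * (a * b) * (b⁻¹ * a⁻¹) = b⁻¹ * ((a⁻¹ * a) * (b * b⁻¹)) * a⁻¹ := by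
      simp only [mul_assoc]
    rw [this, idem_comm (dd_idem a) (rr_idem b)]
    have : b⁻¹ * ((b * b⁻¹) * (a⁻¹ * a)) * a⁻¹ = (b⁻¹ * b * b⁻¹) * (a⁻¹ * a * a⁻¹) := by
      simp only [mul_assoc]
    rw [this, imi, imi]
  exact (inv_unique (a * b) (b⁻¹ * a⁻¹) h1 h2).symm

lemma mim' (a : S) : a * (a⁻¹ * a) = a := by rw [← mul_assoc, mim]

lemma nle_refl (a : S) : nle a a := ⟨a * a⁻¹, rr_idem a, (mim a).symm⟩

lemma nle_trans {a b c : S} (h1 : nle a b) (h2 : nle b c) : nle a c := by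
  obtain ⟨u, hu, rfl⟩ := h1
  obtain ⟨v, hv, rfl⟩ := h2
  exact ⟨u * v, idem_mul_idem hu hv, (mul_assoc u v c).symm⟩

lemma nle_zero (a : S) : nle 0 a := ⟨0, mulz 0, (zmul a).symm⟩

lemma eq_zero_of_nle_zero {a : S} (h : nle a 0) : a = 0 := by
  obtain ⟨u, _, rfl⟩ := h; exact mulz u

lemma idem_nle {e f : S} (he : e * e = e) (h : e * f = e) : nle e f := ⟨e, he, h.symm⟩

lemma nle_rd {a b : S} (h : nle a b) : a = b * (a⁻¹ * a) := by
  obtain ⟨u, hu, rfl⟩ := h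
  rw [mul_inv_rev', idem_inv hu]
  calc u * b = u * (b * b⁻¹ * b) := by rw [mim]
    _ = (u * (b * b⁻¹)) * b := by simp only [mul_assoc]
    _ = ((b * b⁻¹) * u) * b := by rw [idem_comm hu (rr_idem b)]
    _ = ((b * b⁻¹) * (u * u)) * b := by rw [hu]
    _ = b * (b⁻¹ * u * (u * b)) := by simp only [mul_assoc]

lemma nle_of_rd {a b f : S} (hf : f * f = f) (h : a = b * f) : nle a b := by
  refine ⟨a * a⁻¹, rr_idem a, ?_⟩
  have hai : a⁻¹ = f * b⁻¹ := by rw [h, mul_inv_rev', idem_inv hf]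
  calc a = b * f := h
    _ = (b * (b⁻¹ * b)) * f := by rw [mim']
    _ = b * ((b⁻¹ * b) * f) := by simp only [mul_assoc]
    _ = b * (f * (b⁻¹ * b)) := by rw [idem_comm (dd_idem b) hf]
    _ = ((b * (f * f)) * (b⁻¹ * b)) := by rw [hf]; simp only [mul_assoc]
    _ = (b * f) * ((f * b⁻¹) * b) := by simp only [mul_assoc]
    _ = a * (a⁻¹ * b) := by rw [← h, ← hai]
    _ = a * a⁻¹ * b := by simp only [mul_assoc]

lemma nle_dr {a b : S} (h : nle a b) : a = (a * a⁻¹) * b := by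
  obtain ⟨e, he, rfl⟩ := h
  have key : (e * b) * (e * b)⁻¹ * b = e * b := by
    rw [mul_inv_rev', idem_inv he]
    calc e * b * (b⁻¹ * e) * b = e * ((b * b⁻¹) * e) * b := by simp only [mul_assoc]
      _ = e * (e * (b * b⁻¹)) * b := by rw [idem_comm (rr_idem b) he]
      _ = (e * e) * ((b * b⁻¹) * b) := by simp only [mul_assoc]
      _ = e * b := by rw [he, mim]
  exact key.symm

lemma nle_antisymm {a b : S} (h1 : nle a b) (h2 : nle b a) : a = b := by
  have ha := nle_rd h1
  have hb := nle_dr h2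
  calc a = b * (a⁻¹ * a) := ha
    _ = ((b * b⁻¹) * a) * (a⁻¹ * a) := by rw [← hb]
    _ = (b * b⁻¹) * (a * a⁻¹ * a) := by simp only [mul_assoc]
    _ = (b * b⁻¹) * a := by rw [mim]
    _ = b := hb.symm

lemma nle_inv {a b : S} (h : nle a b) : nle a⁻¹ b⁻¹ := by
  obtain ⟨e, he, rfl⟩ := h
  exact nle_of_rd he (by rw [mul_inv_rev', idem_inv he])

lemma nle_mul_right {a b : S} (c : S) (h : nle a b) : nle (a * c) (b * c) := by
  obtain ⟨e, he, rfl⟩ := h; exact ⟨e, he, mul_assoc e b c⟩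

lemma nle_mul_left {a b : S} (c : S) (h : nle a b) : nle (c * a) (c * b) := by
  have hr := nle_rd h
  refine nle_of_rd (dd_idem a) ?_
  rw [mul_assoc, ← hr]

lemma idem_nle_mul {u v : S} (hu : u * u = u) (hv : v * v = v) (h : nle u v) :
    u * v = u := by
  have h1 := nle_rd h
  rw [idem_inv hu, hu] at h1
  calc u * v = (v * u) * v := by rw [← h1]
    _ = v * (u * v) := by simp only [mul_assoc]
    _ = v * (v * u) := by rw [idem_comm hu hv]
    _ = (v * v) * u := by simp only [mul_assoc]
    _ = u := by rw [hv, ← h1]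

lemma mul_absorb {u p q : S} (h1 : u * p = u) (h2 : p * q = p) : u * q = u := by
  calc u * q = (u * p) * q := by rw [h1]
    _ = u * (p * q) := by rw [mul_assoc]
    _ = u * p := by rw [h2]
    _ = u := h1

lemma orth_mul {u v p q : S} (hv : v * v = v) (hq : q * q = q)
    (h1 : u * p = u) (h2 : v * q = v) (h3 : p * q = 0) : u * v = 0 := by
  have h2' : q * v = v := by rw [← idem_comm hv hq]; exact h2
  calc u * v = (u * p) * (q * v) := by rw [h1, h2']
    _ = (u * (p * q)) * v := by simp only [mul_assoc]
    _ = 0 := by rw [h3, mulz, zmul]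

lemma eq_zero_of_d {x : S} (h : x⁻¹ * x = 0) : x = 0 := by
  have := mim' x; rw [h, mulz] at this; exact this.symm

lemma eq_zero_of_r {x : S} (h : x * x⁻¹ = 0) : x = 0 := by
  have := mim x; rw [h, zmul] at this; exact this.symm

lemma conj_idem {x u : S} (hu : u * u = u) :
    (x⁻¹ * u * x) * (x⁻¹ * u * x) = x⁻¹ * u * x := by
  calc (x⁻¹ * u * x) * (x⁻¹ * u * x) = x⁻¹ * (u * (x * x⁻¹)) * (u * x) := by
        simp only [mul_assoc]
    _ = x⁻¹ * ((x * x⁻¹) * u) * (u * x) := by rw [idem_comm hu (rr_idem x)]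
    _ = (x⁻¹ * x * x⁻¹) * ((u * u) * x) := by simp only [mul_assoc]
    _ = x⁻¹ * u * x := by rw [imi, hu, ← mul_assoc]

lemma conj_nle {x u : S} (hu : u * u = u) : nle (x⁻¹ * u * x) (x⁻¹ * x) := by
  refine idem_nle (conj_idem hu) ?_
  calc (x⁻¹ * u * x) * (x⁻¹ * x) = x⁻¹ * u * (x * x⁻¹ * x) := by simp only [mul_assoc]
    _ = x⁻¹ * u * x := by rw [mim]

lemma conj_r {a u : S} (hu : u * u = u) : nle (a * u * a⁻¹) (a * a⁻¹) := by
  have := conj_nle (x := a⁻¹) hu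
  rwa [iinv] at this

lemma r_mul_nle (a s : S) : nle ((a * s) * (a * s)⁻¹) (a * a⁻¹) := by
  have h : (a * s) * (a * s)⁻¹ = a * (s * s⁻¹) * a⁻¹ := by
    rw [mul_inv_rev']; simp only [mul_assoc]
  rw [h]; exact conj_r (rr_idem s)

lemma d_mul_nle (a s : S) : nle ((a * s)⁻¹ * (a * s)) (s⁻¹ * s) := by
  have h : (a * s)⁻¹ * (a * s) = s⁻¹ * (a⁻¹ * a) * s := by
    rw [mul_inv_rev']; simp only [mul_assoc]
  rw [h]; exact conj_nle (dd_idem a)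

lemma compat_idem {e f : S} (he : e * e = e) (hf : f * f = f) : Compat e f := by
  constructor
  · rw [idem_inv hf]; exact idem_mul_idem he hf
  · rw [idem_inv he]; exact idem_mul_idem he hf

lemma compat_symm {a b : S} (h : Compat a b) : Compat b a := by
  obtain ⟨h1, h2⟩ := h
  have e1 : b * a⁻¹ = a * b⁻¹ := by
    have e : b * a⁻¹ = (a * b⁻¹)⁻¹ := by rw [mul_inv_rev', iinv]
    rw [e, idem_inv h1]
  have e2 : b⁻¹ * a = a⁻¹ * b := by
    have e : b⁻¹ * a = (a⁻¹ * b)⁻¹ := by rw [mul_inv_rev', iinv]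
    rw [e, idem_inv h2]
  exact ⟨by rw [e1]; exact h1, by rw [e2]; exact h2⟩

lemma compat_inv {a b : S} (h : Compat a b) : Compat a⁻¹ b⁻¹ := by
  obtain ⟨h1, h2⟩ := h
  constructor
  · rw [iinv]; exact h2
  · rw [iinv]; exact h1

lemma compat_of_nle {a b : S} (h : nle a b) : Compat a b := by
  constructor
  · have hd := nle_dr h
    have e : a * b⁻¹ = (a * a⁻¹) * (b * b⁻¹) := by
      conv_lhs => rw [hd]
      rw [mul_assoc]
    rw [e]; exact idem_mul_idem (rr_idem a) (rr_idem b)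
  · have hr := nle_rd h
    have hai : a⁻¹ = (a⁻¹ * a) * b⁻¹ := by
      calc a⁻¹ = (b * (a⁻¹ * a))⁻¹ := by conv_lhs => rw [hr]
        _ = (a⁻¹ * a) * b⁻¹ := by rw [mul_inv_rev', idem_inv (dd_idem a)]
    have e : a⁻¹ * b = (a⁻¹ * a) * (b⁻¹ * b) := by
      conv_lhs => rw [hai]
      rw [mul_assoc]
    rw [e]; exact idem_mul_idem (dd_idem a) (dd_idem b)

lemma compat_zero (a : S) : Compat a 0 := by
  constructor
  · rw [zinv, mulz, mulz]
  · rw [mulz, mulz]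

lemma nle_of_eq_mmul {E F G : S} (hE : E * E = E) (hF : F * F = F) (hG : G * G = G)
    (h : E * F * G = E) : nle E F := by
  have h2 : E * F = E := by
    calc E * F = (E * F * G) * F := by rw [h]
      _ = (E * F) * (G * F) := by simp only [mul_assoc]
      _ = (E * F) * (F * G) := by rw [idem_comm hG hF]
      _ = (E * (F * F)) * G := by simp only [mul_assoc]
      _ = E * F * G := by rw [hF]
      _ = E := h
  exact idem_nle hE h2

lemma conj_idem' {a u : S} (hu : u * u = u) :
    (a * u * a⁻¹) * (a * u * a⁻¹) = a * u * a⁻¹ := by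
  have := conj_idem (x := a⁻¹) hu
  rwa [iinv] at this

lemma sq_zero {s : S} (h : (s⁻¹ * s) * (s * s⁻¹) = 0) : s * s = 0 := by
  have e : (s * ((s⁻¹ * s) * (s * s⁻¹))) * s = s * s := by
    calc (s * ((s⁻¹ * s) * (s * s⁻¹))) * s = (s * (s⁻¹ * s)) * ((s * s⁻¹) * s) := by
          simp only [mul_assoc]
      _ = s * s := by rw [mim', mim]
  rw [← e, h, mulz, zmul]

end Toolbox

section DistTools

variable {S : Type u} [DistributiveInverseMonoid S]

lemma le_bsup_left {a b : S} (h : Compat a b) : nle a (bsup a b) :=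
  DistributiveInverseMonoid.le_sup_left a b h

lemma le_bsup_right {a b : S} (h : Compat a b) : nle b (bsup a b) :=
  DistributiveInverseMonoid.le_sup_right a b h

lemma bsup_le {a b c : S} (hab : Compat a b) (h1 : nle a c) (h2 : nle b c) :
    nle (bsup a b) c :=
  DistributiveInverseMonoid.sup_le a b c hab h1 h2

lemma bsup_mul {a b : S} (c : S) (h : Compat a b) :
    bsup a b * c = bsup (a * c) (b * c) :=
  DistributiveInverseMonoid.sup_mul a b c h

lemma mul_bsup {a b : S} (c : S) (h : Compat a b) :
    c * bsup a b = bsup (c * a) (c * b) :=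
  DistributiveInverseMonoid.mul_sup a b c h

lemma bsup_eq_left {a b : S} (h : nle b a) : bsup a b = a := by
  have hc : Compat a b := compat_symm (compat_of_nle h)
  exact nle_antisymm (bsup_le hc (nle_refl a) h) (le_bsup_left hc)

lemma bsup_zero (a : S) : bsup a 0 = a := bsup_eq_left (nle_zero a)

lemma inv_bsup {a b : S} (h : Compat a b) : (bsup a b)⁻¹ = bsup a⁻¹ b⁻¹ := by
  have key : ∀ u v : S, Compat u v → nle (bsup u⁻¹ v⁻¹) (bsup u v)⁻¹ := by
    intro u v huv
    exact bsup_le (compat_inv huv) (nle_inv (le_bsup_left huv)) (nle_inv (le_bsup_right huv))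
  refine nle_antisymm ?_ (key a b h)
  have h2 := key a⁻¹ b⁻¹ (compat_inv h)
  rw [iinv, iinv] at h2
  have h3 := nle_inv h2
  rwa [iinv] at h3

/-- `Touch g s`: there is a nonzero element with domain under `g` and range
under the range of `s`. -/
def Touch (g s : S) : Prop :=
  ∃ x : S, x ≠ 0 ∧ nle (x⁻¹ * x) g ∧ nle (x * x⁻¹) (s * s⁻¹)

lemma touch_of_mul {g s x : S} (hne : (s * s⁻¹) * x ≠ 0) (hxd : nle (x⁻¹ * x) g) :
    Touch g s := by
  refine ⟨(s * s⁻¹) * x, hne, ?_, ?_⟩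
  · have e : ((s * s⁻¹) * x)⁻¹ * ((s * s⁻¹) * x) = x⁻¹ * (s * s⁻¹) * x := by
      rw [mul_inv_rev', idem_inv (rr_idem s)]
      calc (x⁻¹ * (s * s⁻¹)) * ((s * s⁻¹) * x)
          = x⁻¹ * (((s * s⁻¹) * (s * s⁻¹)) * x) := by simp only [mul_assoc]
        _ = x⁻¹ * (s * s⁻¹) * x := by rw [rr_idem s]; simp only [mul_assoc]
    rw [e]
    exact nle_trans (conj_nle (rr_idem s)) hxd
  · have e : ((s * s⁻¹) * x) * ((s * s⁻¹) * x)⁻¹ = (s * s⁻¹) * (x * x⁻¹) * (s * s⁻¹) := by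
      rw [mul_inv_rev', idem_inv (rr_idem s)]
      simp only [mul_assoc]
    rw [e]
    have h := conj_r (a := s * s⁻¹) (rr_idem x)
    rw [idem_inv (rr_idem s)] at h
    rwa [rr_idem s] at h

lemma touch_all (h0 : ZeroSimplifying S) {g : S} (hg : g * g = g) (hg0 : g ≠ 0) :
    ∀ f : S, f * f = f → f ≠ 0 →
      ∃ x : S, x ≠ 0 ∧ nle (x⁻¹ * x) g ∧ nle (x * x⁻¹) f := by
  have hVI : IsVIdeal {s : S | ¬ Touch g s} := by
    refine ⟨⟨⟨0, ?_⟩, ?_⟩, ?_⟩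
    · rintro ⟨x, hx0, -, hxr⟩
      rw [zinv, mulz] at hxr
      exact hx0 (eq_zero_of_r (eq_zero_of_nle_zero hxr))
    · intro a ha s
      constructor
      · rintro ⟨x, hx0, hxd, hxr⟩
        apply ha
        have hform : (s * a) * (s * a)⁻¹ = s * (a * a⁻¹) * s⁻¹ := by
          rw [mul_inv_rev']; simp only [mul_assoc]
        rw [hform] at hxr
        have hrs : nle (x * x⁻¹) (s * s⁻¹) := by
          refine nle_trans hxr ?_
          exact conj_r (rr_idem a)
        have hxxs : (x * x⁻¹) * (s * s⁻¹) = x * x⁻¹ :=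
          idem_nle_mul (rr_idem x) (rr_idem s) hrs
        have hsx : (s * s⁻¹) * x = x := by
          calc (s * s⁻¹) * x = (s * s⁻¹) * ((x * x⁻¹) * x) := by rw [mim]
            _ = ((s * s⁻¹) * (x * x⁻¹)) * x := by rw [← mul_assoc]
            _ = ((x * x⁻¹) * (s * s⁻¹)) * x := by rw [idem_comm (rr_idem s) (rr_idem x)]
            _ = (x * x⁻¹) * x := by rw [hxxs]
            _ = x := mim x
        have hxw : (x * x⁻¹) * (s * (a * a⁻¹) * s⁻¹) = x * x⁻¹ :=
          idem_nle_mul (rr_idem x) (conj_idem' (rr_idem a)) hxr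
        refine ⟨s⁻¹ * x, ?_, ?_, ?_⟩
        · intro hzero
          apply hx0
          have hz : s * (s⁻¹ * x) = 0 := by rw [hzero, mulz]
          rwa [← mul_assoc, hsx] at hz
        · have e : (s⁻¹ * x)⁻¹ * (s⁻¹ * x) = x⁻¹ * x := by
            rw [mul_inv_rev', iinv]
            calc (x⁻¹ * s) * (s⁻¹ * x) = x⁻¹ * ((s * s⁻¹) * x) := by simp only [mul_assoc]
              _ = x⁻¹ * x := by rw [hsx]
          rw [e]; exact hxd
        · have e : (s⁻¹ * x) * (s⁻¹ * x)⁻¹ = s⁻¹ * (x * x⁻¹) * s := by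
            rw [mul_inv_rev', iinv]
            simp only [mul_assoc]
          rw [e]
          have hEFG : (s⁻¹ * (x * x⁻¹) * s) * (a * a⁻¹) * (s⁻¹ * s) = s⁻¹ * (x * x⁻¹) * s := by
            calc (s⁻¹ * (x * x⁻¹) * s) * (a * a⁻¹) * (s⁻¹ * s)
                = s⁻¹ * ((x * x⁻¹) * (s * (a * a⁻¹) * s⁻¹)) * s := by simp only [mul_assoc]
              _ = s⁻¹ * (x * x⁻¹) * s := by rw [hxw]
          exact nle_of_eq_mmul (conj_idem (rr_idem x)) (rr_idem a) (dd_idem s) hEFG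
      · rintro ⟨x, hx0, hxd, hxr⟩
        apply ha
        exact ⟨x, hx0, hxd, nle_trans hxr (r_mul_nle a s)⟩
    · intro a ha b hb hab
      rintro ⟨x, hx0, hxd, hxr⟩
      by_cases h1 : (a * a⁻¹) * x = 0
      · by_cases h2 : (b * b⁻¹) * x = 0
        · have hainvx : a⁻¹ * x = 0 := by
            have e : a⁻¹ * (a * a⁻¹) = a⁻¹ := by rw [← mul_assoc, imi]
            calc a⁻¹ * x = (a⁻¹ * (a * a⁻¹)) * x := by rw [e]
              _ = a⁻¹ * ((a * a⁻¹) * x) := by rw [mul_assoc]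
              _ = 0 := by rw [h1, mulz]
          have hbinvx : b⁻¹ * x = 0 := by
            have e : b⁻¹ * (b * b⁻¹) = b⁻¹ := by rw [← mul_assoc, imi]
            calc b⁻¹ * x = (b⁻¹ * (b * b⁻¹)) * x := by rw [e]
              _ = b⁻¹ * ((b * b⁻¹) * x) := by rw [mul_assoc]
              _ = 0 := by rw [h2, mulz]
          have hsupinv : (bsup a b)⁻¹ * x = 0 := by
            rw [inv_bsup hab, bsup_mul x (compat_inv hab), hainvx, hbinvx, bsup_zero]
          obtain ⟨h, hh, hxx⟩ := hxr
          apply hx0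
          calc x = (x * x⁻¹) * x := (mim x).symm
            _ = (h * ((bsup a b) * (bsup a b)⁻¹)) * x := by rw [← hxx]
            _ = h * ((bsup a b) * ((bsup a b)⁻¹ * x)) := by simp only [mul_assoc]
            _ = 0 := by rw [hsupinv, mulz, mulz]
        · exact hb (touch_of_mul h2 hxd)
      · exact ha (touch_of_mul h1 hxd)
  rcases h0 _ hVI with hI | hI
  · intro f hf hf0
    have hfI : f ∉ ({0} : Set S) := by simpa using hf0
    rw [← hI] at hfI
    have ht : Touch g f := not_not.mp hfI
    obtain ⟨x, hx0, hxd, hxr⟩ := ht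
    refine ⟨x, hx0, hxd, ?_⟩
    rwa [idem_inv hf, hf] at hxr
  · exfalso
    have hgI : g ∈ {s : S | ¬ Touch g s} := hI ▸ Set.mem_univ g
    refine hgI ⟨g, hg0, ?_, ?_⟩
    · rw [idem_inv hg, hg]; exact nle_refl g
    · rw [idem_inv hg, hg]; exact nle_refl g

end DistTools


section BoolTools

variable {S : Type u} [BooleanInverseMonoid S]

lemma split_idem (hat : IdemAtomless S) {e : S} (he : e * e = e) (hne : e ≠ 0) :
    ∃ f g : S, f * f = f ∧ g * g = g ∧ f ≠ 0 ∧ g ≠ 0 ∧ f * g = 0 ∧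
      f * e = f ∧ g * e = g := by
  obtain ⟨f, hf, hf0, hfle, hfne⟩ := hat e he hne
  have hfe : f * e = f := idem_nle_mul hf he hfle
  set c := BooleanInverseMonoid.compl f with hc
  have hbc : c * c = c := BooleanInverseMonoid.compl_idem f hf
  have hfc : f * c = 0 := BooleanInverseMonoid.mul_compl f hf
  have hec : (e * c) * (e * c) = e * c := by
    calc (e * c) * (e * c) = e * ((c * e) * c) := by simp only [mul_assoc]
      _ = e * ((e * c) * c) := by rw [idem_comm hbc he]
      _ = (e * e) * (c * c) := by simp only [mul_assoc]
      _ = e * c := by rw [he, hbc]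
  refine ⟨f, e * c, hf, hec, hf0, ?_, ?_, hfe, ?_⟩
  · intro hzero
    apply hfne
    have h1 : bsup f c = 1 := BooleanInverseMonoid.sup_compl f hf
    have h2 : e * bsup f c = e := by rw [h1, mul_one]
    rw [mul_bsup e (compat_idem hf hbc), hzero, bsup_zero] at h2
    rw [← h2, idem_comm he hf, hfe]
  · calc f * (e * c) = (f * e) * c := by rw [← mul_assoc]
      _ = f * c := by rw [hfe]
      _ = 0 := hfc
  · calc (e * c) * e = e * (c * e) := by rw [mul_assoc]
      _ = e * (e * c) := by rw [idem_comm hbc he]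
      _ = (e * e) * c := by rw [← mul_assoc]
      _ = e * c := by rw [he]

end BoolTools

/-- In a 0-simplifying Tarski monoid, for every non-zero
idempotent `e` there are infinitesimals `a, b ∈ eSe` such that `ab` is a
restricted product (`a⁻¹a = bb⁻¹`) and `ab` is an infinitesimal. -/
theorem statement8 (S : Type u) [BooleanInverseMeetMonoid S] [Countable S]
    (hat : IdemAtomless S) (h0 : ZeroSimplifying S)
    (e : S) (he : e * e = e) (hne : e ≠ 0) :
    ∃ a b : S, Infinitesimal a ∧ Infinitesimal b ∧
      (∃ s : S, a = e * s * e) ∧ (∃ s : S, b = e * s * e) ∧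
      a⁻¹ * a = b * b⁻¹ ∧ Infinitesimal (a * b) := by
  obtain ⟨f1, g, hf1, hg, hf10, hg0, hf1g, hf1e, hge⟩ := split_idem hat he hne
  obtain ⟨f2, f3, hf2, hf3, hf20, hf30, hf2f3, hf2g, hf3g⟩ := split_idem hat hg hg0
  have hf2e : f2 * e = f2 := mul_absorb hf2g hge
  have hf3e : f3 * e = f3 := mul_absorb hf3g hge
  have hf1f2 : f1 * f2 = 0 := by
    have h2 : g * f2 = f2 := by rw [← idem_comm hf2 hg]; exact hf2g
    calc f1 * f2 = f1 * (g * f2) := by rw [h2]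
      _ = (f1 * g) * f2 := by rw [← mul_assoc]
      _ = 0 := by rw [hf1g, zmul]
  have hf1f3 : f1 * f3 = 0 := by
    have h2 : g * f3 = f3 := by rw [← idem_comm hf3 hg]; exact hf3g
    calc f1 * f3 = f1 * (g * f3) := by rw [h2]
      _ = (f1 * g) * f3 := by rw [← mul_assoc]
      _ = 0 := by rw [hf1g, zmul]
  have hf2f1 : f2 * f1 = 0 := by rw [idem_comm hf2 hf1]; exact hf1f2
  have hf3f1 : f3 * f1 = 0 := by rw [idem_comm hf3 hf1]; exact hf1f3
  have hf3f2 : f3 * f2 = 0 := by rw [idem_comm hf3 hf2]; exact hf2f3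
  obtain ⟨x, hx0, hxd, hxr⟩ := touch_all h0 hf2 hf20 f1 hf1 hf10
  have hk0 : x⁻¹ * x ≠ 0 := fun h => hx0 (eq_zero_of_d h)
  obtain ⟨y, hy0, hyd, hyr⟩ := touch_all h0 hf3 hf30 (x⁻¹ * x) (dd_idem x) hk0
  set a := x * (y * y⁻¹) with ha
  have hxdm : (x⁻¹ * x) * f2 = x⁻¹ * x := idem_nle_mul (dd_idem x) hf2 hxd
  have hxrm : (x * x⁻¹) * f1 = x * x⁻¹ := idem_nle_mul (rr_idem x) hf1 hxr
  have hydm : (y⁻¹ * y) * f3 = y⁻¹ * y := idem_nle_mul (dd_idem y) hf3 hyd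
  have hyrm : (y * y⁻¹) * (x⁻¹ * x) = y * y⁻¹ :=
    idem_nle_mul (rr_idem y) (dd_idem x) hyr
  have hyrf2 : (y * y⁻¹) * f2 = y * y⁻¹ := mul_absorb hyrm hxdm
  have hxxy : (x⁻¹ * x) * y = y := by
    calc (x⁻¹ * x) * y = (x⁻¹ * x) * ((y * y⁻¹) * y) := by rw [mim]
      _ = ((x⁻¹ * x) * (y * y⁻¹)) * y := by rw [← mul_assoc]
      _ = ((y * y⁻¹) * (x⁻¹ * x)) * y := by rw [idem_comm (dd_idem x) (rr_idem y)]
      _ = (y * y⁻¹) * y := by rw [hyrm]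
      _ = y := mim y
  have hainv : a⁻¹ = (y * y⁻¹) * x⁻¹ := by
    rw [ha, mul_inv_rev', idem_inv (rr_idem y)]
  have hda : a⁻¹ * a = y * y⁻¹ := by
    rw [hainv, ha]
    calc ((y * y⁻¹) * x⁻¹) * (x * (y * y⁻¹))
        = (y * y⁻¹) * ((x⁻¹ * x) * (y * y⁻¹)) := by simp only [mul_assoc]
      _ = (y * y⁻¹) * ((y * y⁻¹) * (x⁻¹ * x)) := by rw [idem_comm (dd_idem x) (rr_idem y)]
      _ = (y * y⁻¹) * (y * y⁻¹) := by rw [hyrm]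
      _ = y * y⁻¹ := rr_idem y
  have hra : a * a⁻¹ = x * (y * y⁻¹) * x⁻¹ := by
    rw [hainv, ha]
    calc (x * (y * y⁻¹)) * ((y * y⁻¹) * x⁻¹)
        = x * (((y * y⁻¹) * (y * y⁻¹)) * x⁻¹) := by simp only [mul_assoc]
      _ = x * ((y * y⁻¹) * x⁻¹) := by rw [rr_idem y]
      _ = x * (y * y⁻¹) * x⁻¹ := by rw [← mul_assoc]
  have hram : (a * a⁻¹) * (x * x⁻¹) = a * a⁻¹ := by
    rw [hra]
    calc (x * (y * y⁻¹) * x⁻¹) * (x * x⁻¹)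
        = x * ((y * y⁻¹) * (x⁻¹ * x)) * x⁻¹ := by simp only [mul_assoc]
      _ = x * (y * y⁻¹) * x⁻¹ := by rw [hyrm]
  have hraf1 : (a * a⁻¹) * f1 = a * a⁻¹ := mul_absorb hram hxrm
  have hay : a * y = x * y := by rw [ha, mul_assoc, mim]
  have hdxy : (x * y)⁻¹ * (x * y) = y⁻¹ * y := by
    rw [mul_inv_rev']
    calc (y⁻¹ * x⁻¹) * (x * y) = y⁻¹ * ((x⁻¹ * x) * y) := by simp only [mul_assoc]
      _ = y⁻¹ * y := by rw [hxxy]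
  have hxy0 : x * y ≠ 0 := by
    intro hz
    apply hy0
    apply eq_zero_of_d
    have h := hdxy
    rw [hz, zinv, zmul] at h
    exact h.symm
  have ha0 : a ≠ 0 := by
    intro hz
    apply hxy0
    rw [← hay, hz, zmul]
  have haa : a * a = 0 := by
    apply sq_zero
    rw [hda]
    exact orth_mul (rr_idem a) hf1 hyrf2 hraf1 hf2f1
  have hyy : y * y = 0 := by
    apply sq_zero
    exact orth_mul (rr_idem y) hf2 hydm hyrf2 hf3f2
  have hrxy : (x * y) * (x * y)⁻¹ = a * a⁻¹ := by
    rw [hra, mul_inv_rev']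
    calc (x * y) * (y⁻¹ * x⁻¹) = x * ((y * y⁻¹) * x⁻¹) := by simp only [mul_assoc]
      _ = x * (y * y⁻¹) * x⁻¹ := by rw [← mul_assoc]
  have habab : (x * y) * (x * y) = 0 := by
    apply sq_zero
    rw [hdxy, hrxy]
    exact orth_mul (rr_idem a) hf1 hydm hraf1 hf3f1
  have hrae : (a * a⁻¹) * e = a * a⁻¹ := mul_absorb hraf1 hf1e
  have hdae : (y * y⁻¹) * e = y * y⁻¹ := mul_absorb hyrf2 hf2e
  have hyde : (y⁻¹ * y) * e = y⁻¹ * y := mul_absorb hydm hf3e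
  have hea : e * a = a := by
    calc e * a = e * ((a * a⁻¹) * a) := by rw [mim]
      _ = (e * (a * a⁻¹)) * a := by rw [← mul_assoc]
      _ = ((a * a⁻¹) * e) * a := by rw [idem_comm he (rr_idem a)]
      _ = (a * a⁻¹) * a := by rw [hrae]
      _ = a := mim a
  have hae : a * e = a := by
    calc a * e = (a * (a⁻¹ * a)) * e := by rw [mim']
      _ = a * ((a⁻¹ * a) * e) := by rw [mul_assoc]
      _ = a * (a⁻¹ * a) := by rw [hda, hdae, ← hda]
      _ = a := mim' a
  have hey : e * y = y := by
    calc e * y = e * ((y * y⁻¹) * y) := by rw [mim]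
      _ = (e * (y * y⁻¹)) * y := by rw [← mul_assoc]
      _ = ((y * y⁻¹) * e) * y := by rw [idem_comm he (rr_idem y)]
      _ = (y * y⁻¹) * y := by rw [hdae]
      _ = y := mim y
  have hye : y * e = y := by
    calc y * e = (y * (y⁻¹ * y)) * e := by rw [mim']
      _ = y * ((y⁻¹ * y) * e) := by rw [mul_assoc]
      _ = y * (y⁻¹ * y) := by rw [hyde]
      _ = y := mim' y
  refine ⟨a, y, ⟨ha0, haa⟩, ⟨hy0, hyy⟩, ⟨a, ?_⟩, ⟨y, ?_⟩, ?_, ?_⟩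
  · rw [hea, hae]
  · rw [hey, hye]
  · rw [hda]
  · refine ⟨?_, ?_⟩
    · rw [hay]; exact hxy0
    · calc (a * y) * (a * y) = (x * y) * (x * y) := by rw [hay]
        _ = 0 := habab
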